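/- The double integral ∫_{v=−1}^{1} ∫_{u=−1}^{0} u·(1 − v²) / (1 + v + (1 − v)·u²)² du dv equals −1/2. -/

import Mathlib

open Real

lemma inner_integral_eval (v : ℝ) (hv1 : -1 < v) (hv2 : v ≤ 1) :
    (∫ u in (-1:ℝ)..0, u * (1 - v ^ 2) / (1 + v + (1 - v) * u ^ 2) ^ 2)
      = (v - 1) / 4 := by
  have hvp : (0:ℝ) < 1 + v := by linarith
  have hden : ∀ u : ℝ, (0:ℝ) < 1 + v + (1 - v) * u ^ 2 := by
    intro u
    have : 0 ≤ (1 - v) * u ^ 2 := mul_nonneg (by linarith) (sq_nonneg u)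
    linarith
  have key : ∀ u ∈ Set.uIcc (-1:ℝ) 0,
      HasDerivAt (fun u : ℝ => -(1 + v) / (2 * (1 + v + (1 - v) * u ^ 2)))
        (u * (1 - v ^ 2) / (1 + v + (1 - v) * u ^ 2) ^ 2) u := by
    intro u _
    have hne : (2 * (1 + v + (1 - v) * u ^ 2)) ≠ 0 := (mul_pos two_pos (hden u)).ne'
    have h1 : HasDerivAt (fun u : ℝ => 2 * (1 + v + (1 - v) * u ^ 2))
        (2 * ((1 - v) * (2 * u))) u := by
      have h0 : HasDerivAt (fun u : ℝ => 1 + v + (1 - v) * u ^ 2)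
          ((1 - v) * (2 * u)) u := by
        have := ((hasDerivAt_pow 2 u).const_mul (1 - v)).const_add (1 + v)
        simpa using this
      simpa using h0.const_mul 2
    have h2 : HasDerivAt (fun u : ℝ => -(1 + v) / (2 * (1 + v + (1 - v) * u ^ 2))) _ u :=
      (hasDerivAt_const u (-(1 + v))).div h1 hne
    convert h2 using 1
    have hne' : (1 + v + (1 - v) * u ^ 2) ≠ 0 := (hden u).ne'
    rw [div_eq_div_iff (pow_ne_zero 2 hne') (pow_ne_zero 2 hne)]
    ring
  have hcont : IntervalIntegrable
      (fun u : ℝ => u * (1 - v ^ 2) / (1 + v + (1 - v) * u ^ 2) ^ 2)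
      MeasureTheory.volume (-1) 0 := by
    apply ContinuousOn.intervalIntegrable
    apply ContinuousOn.div
    · fun_prop
    · fun_prop
    · intro u _
      exact pow_ne_zero 2 (hden u).ne'
  rw [intervalIntegral.integral_eq_sub_of_hasDerivAt key hcont]
  have h2 : (1 + v + (1 - v) * (-1 : ℝ) ^ 2) = 2 := by ring
  have h0 : (1 + v + (1 - v) * (0 : ℝ) ^ 2) = 1 + v := by ring
  rw [h2, h0]
  field_simp
  ring

theorem area_density_uv_integral :
    (∫ v in (-1:ℝ)..1, ∫ u in (-1:ℝ)..0,
      u * (1 - v ^ 2) / (1 + v + (1 - v) * u ^ 2) ^ 2) = -(1 / 2) := by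
  have hcongr : (∫ v in (-1:ℝ)..1, ∫ u in (-1:ℝ)..0,
      u * (1 - v ^ 2) / (1 + v + (1 - v) * u ^ 2) ^ 2)
      = ∫ v in (-1:ℝ)..1, (v - 1) / 4 := by
    apply intervalIntegral.integral_congr_ae
    filter_upwards with v hv
    rw [Set.uIoc_of_le (by norm_num : (-1:ℝ) ≤ 1)] at hv
    exact inner_integral_eval v hv.1 hv.2
  rw [hcongr]
  have : (∫ v in (-1:ℝ)..1, (v - 1) / 4)
      = (∫ v in (-1:ℝ)..1, v / 4) - ∫ v in (-1:ℝ)..1, (1:ℝ) / 4 := by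
    rw [← intervalIntegral.integral_sub]
    · congr 1; ext v; ring
    · exact ((continuous_id.div_const 4).intervalIntegrable _ _)
    · exact intervalIntegrable_const
  rw [this]
  simp [intervalIntegral.integral_div, integral_id]
  norm_num
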